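/- (Fundamental prox-gradient inequality.) Let l : E → ℝ be convex and differentiable with L-Lipschitz gradient, let h : E → (−∞, ∞] be a proper closed convex function, let F = l + h, and let M ≥ L with M > 0. Fix x ∈ E and suppose T minimizes y ↦ h(y) + (M/2)‖y − (x − (1/M)∇l(x))‖²; set G = M(x − T). Then for every y in the domain of h: F(T) − F(y) ≤ ⟨G, x − y⟩ − (1/(2M))‖G‖², and consequently F(T) − F(y) ≤ ‖G‖·‖x − y‖. -/

import Mathlib

open scoped RealInnerProductSpace
open intervalIntegral Set Filter

section Aux

variable {E : Type*} [NormedAddCommGroup E] [InnerProductSpace ℝ E] [CompleteSpace E]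

lemma aux_hasDerivAt (l : E → ℝ) (hldiff : Differentiable ℝ l) (a v : E) (t : ℝ) :
    HasDerivAt (fun s : ℝ => l (a + s • v)) ⟪gradient l (a + t • v), v⟫ t := by
  have hγ : HasDerivAt (fun s : ℝ => a + s • v) v t := by
    simpa using ((hasDerivAt_id t).smul_const v).const_add a
  have hf := ((hldiff (a + t • v)).hasGradientAt.hasFDerivAt).comp_hasDerivAt t hγ
  simpa [InnerProductSpace.toDual_apply_apply, Function.comp_def] using hf

lemma aux_descent (l : E → ℝ) (hldiff : Differentiable ℝ l) (L : ℝ)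
    (hLip : ∀ a b : E, ‖gradient l a - gradient l b‖ ≤ L * ‖a - b‖) (a b : E) :
    l b ≤ l a + ⟪gradient l a, b - a⟫ + L / 2 * ‖b - a‖ ^ 2 := by
  set v := b - a with hv
  have hgc : Continuous (gradient l) := by
    have : LipschitzWith (Real.toNNReal L) (gradient l) := by
      apply LipschitzWith.of_dist_le_mul
      intro p q
      rw [dist_eq_norm, dist_eq_norm]
      calc ‖gradient l p - gradient l q‖ ≤ L * ‖p - q‖ := hLip p q
        _ ≤ Real.toNNReal L * ‖p - q‖ := by
            apply mul_le_mul_of_nonneg_right _ (norm_nonneg _)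
            rw [Real.coe_toNNReal']; exact le_max_left _ _
    exact this.continuous
  have hc : Continuous (fun t : ℝ => ⟪gradient l (a + t • v), v⟫) := by
    exact (hgc.comp (by continuity)).inner continuous_const
  have hint : l (a + (1:ℝ) • v) - l (a + (0:ℝ) • v)
      = ∫ t in (0:ℝ)..1, ⟪gradient l (a + t • v), v⟫ := by
    refine (intervalIntegral.integral_eq_sub_of_hasDerivAt
      (fun t _ => aux_hasDerivAt l hldiff a v t) (hc.intervalIntegrable 0 1)).symm
  have hmono : (∫ t in (0:ℝ)..1, ⟪gradient l (a + t • v), v⟫)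
      ≤ ∫ t in (0:ℝ)..1, (⟪gradient l a, v⟫ + L * ‖v‖ ^ 2 * t) := by
    apply intervalIntegral.integral_mono_on (by norm_num) (hc.intervalIntegrable 0 1)
      ((by continuity : Continuous fun t : ℝ => ⟪gradient l a, v⟫ + L * ‖v‖ ^ 2 * t).intervalIntegrable 0 1)
    intro t ht
    have h1 : ⟪gradient l (a + t • v), v⟫ - ⟪gradient l a, v⟫
        = ⟪gradient l (a + t • v) - gradient l a, v⟫ := by
      rw [inner_sub_left]
    have h2 : ⟪gradient l (a + t • v) - gradient l a, v⟫ ≤ L * ‖v‖ ^ 2 * t := by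
      calc ⟪gradient l (a + t • v) - gradient l a, v⟫
          ≤ ‖gradient l (a + t • v) - gradient l a‖ * ‖v‖ := real_inner_le_norm _ _
        _ ≤ (L * ‖a + t • v - a‖) * ‖v‖ :=
            mul_le_mul_of_nonneg_right (hLip _ _) (norm_nonneg _)
        _ = L * ‖v‖ ^ 2 * t := by
            have : ‖a + t • v - a‖ = t * ‖v‖ := by
              simp [norm_smul, abs_of_nonneg ht.1]
            rw [this]; ring
    linarith
  have hval : (∫ t in (0:ℝ)..1, (⟪gradient l a, v⟫ + L * ‖v‖ ^ 2 * t))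
      = ⟪gradient l a, v⟫ + L / 2 * ‖v‖ ^ 2 := by
    rw [intervalIntegral.integral_add (intervalIntegrable_const)
      ((intervalIntegrable_id).const_mul _)]
    rw [intervalIntegral.integral_const_mul, integral_id, intervalIntegral.integral_const]
    norm_num; ring
  have hab : a + v = b := by rw [hv]; abel
  simp only [one_smul, zero_smul, add_zero, hab] at hint
  linarith [hint ▸ hmono, hval]

lemma aux_convex (l : E → ℝ) (hlconv : ConvexOn ℝ Set.univ l) (hldiff : Differentiable ℝ l)
    (a b : E) : l a + ⟪gradient l a, b - a⟫ ≤ l b := by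
  set v := b - a with hv
  set f : ℝ → ℝ := fun s => l (a + s • v) with hf
  have hd : HasDerivAt f ⟪gradient l a, v⟫ 0 := by
    simpa using aux_hasDerivAt l hldiff a v 0
  have hslope : Tendsto (slope f 0) (nhdsWithin 0 (Set.Ioi 0)) (nhds ⟪gradient l a, v⟫) := by
    exact (hasDerivAt_iff_tendsto_slope.1 hd).mono_left
      (nhdsWithin_mono _ (fun t ht => ne_of_gt ht))
  have hle : ⟪gradient l a, v⟫ ≤ f 1 - f 0 := by
    refine le_of_tendsto hslope ?_
    filter_upwards [Ioc_mem_nhdsGT_of_mem (by norm_num : (0:ℝ) ∈ Set.Ico 0 1)] with t ht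
    have ht0 : 0 < t := ht.1
    have hcv := hlconv.2 (Set.mem_univ b) (Set.mem_univ a) (le_of_lt ht0)
      (by linarith [ht.2] : (0:ℝ) ≤ 1 - t) (by ring)
    have heq : t • b + (1 - t) • a = a + t • v := by rw [hv]; module
    rw [heq] at hcv
    have : f t ≤ t * l b + (1 - t) * l a := by simpa [smul_eq_mul] using hcv
    have hf0 : f 0 = l a := by simp [hf]
    have hf1 : f 1 = l b := by simp [hf, hv]
    rw [slope_def_field, sub_zero, div_le_iff₀ ht0]
    rw [hf0, hf1]
    nlinarith [this]
  have hf0 : f 0 = l a := by simp [hf]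
  have hf1 : f 1 = l b := by simp [hf, hv]
  rw [hf0, hf1] at hle
  linarith

end Aux

theorem fundamental_prox_gradient_inequality
    {E : Type*} [NormedAddCommGroup E] [InnerProductSpace ℝ E] [CompleteSpace E]
    (l : E → ℝ) (hlconv : ConvexOn ℝ Set.univ l) (hldiff : Differentiable ℝ l)
    (L : ℝ)
    (hLip : ∀ a b : E, ‖gradient l a - gradient l b‖ ≤ L * ‖a - b‖)
    (h : E → EReal)
    (hproper_bot : ∀ x : E, h x ≠ ⊥) (hproper_top : ∃ x : E, h x ≠ ⊤)
    (hclosed : LowerSemicontinuous h)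
    (hconvex : ∀ x y : E, ∀ t : ℝ, 0 ≤ t → t ≤ 1 →
      h (t • x + (1 - t) • y) ≤ (t : EReal) * h x + ((1 - t : ℝ) : EReal) * h y)
    (Fn : E → EReal) (hFn : ∀ x : E, Fn x = (l x : EReal) + h x)
    (M : ℝ) (hM : 0 < M) (hML : L ≤ M)
    (x T : E)
    (hT : ∀ y : E,
      h T + ((M / 2 * ‖T - (x - (1 / M) • gradient l x)‖ ^ 2 : ℝ) : EReal)
        ≤ h y + ((M / 2 * ‖y - (x - (1 / M) • gradient l x)‖ ^ 2 : ℝ) : EReal))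
    (G : E) (hG : G = M • (x - T)) :
    ∀ y : E, h y ≠ ⊤ →
      Fn T ≤ Fn y + ((⟪G, x - y⟫ - 1 / (2 * M) * ‖G‖ ^ 2 : ℝ) : EReal) ∧
      Fn T ≤ Fn y + ((‖G‖ * ‖x - y‖ : ℝ) : EReal) := by
  set u := x - (1 / M) • gradient l x with hu
  -- h T is finite
  have hTtop : h T ≠ ⊤ := by
    obtain ⟨y0, hy0⟩ := hproper_top
    intro htop
    have := hT y0
    rw [htop] at this
    have h1 : (⊤ : EReal) + ((M / 2 * ‖T - u‖ ^ 2 : ℝ) : EReal) = ⊤ :=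
      EReal.top_add_of_ne_bot (EReal.coe_ne_bot _)
    by_cases hy0t : h y0 = ⊤
    · exact hy0 hy0t
    have hy0r : h y0 = ((h y0).toReal : EReal) := (EReal.coe_toReal hy0t (hproper_bot y0)).symm
    rw [h1, hy0r, ← EReal.coe_add, top_le_iff] at this
    exact EReal.coe_ne_top _ this
  intro y hytop
  set hTr : ℝ := (h T).toReal with hhTr
  set hyr : ℝ := (h y).toReal with hhyr
  have hhT : h T = (hTr : EReal) := (EReal.coe_toReal hTtop (hproper_bot T)).symm
  have hhy : h y = (hyr : EReal) := (EReal.coe_toReal hytop (hproper_bot y)).symm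
  -- the prox subgradient inequality
  have key : hTr ≤ hyr + ⟪gradient l x - G, y - T⟫ := by
    set w := y - T with hw
    set s := T - u with hs
    -- step A/B combined: for all t in (0,1]
    have stepT : ∀ t : ℝ, 0 < t → t ≤ 1 →
        hTr - hyr ≤ M * ⟪w, s⟫ + M / 2 * t * ‖w‖ ^ 2 := by
      intro t ht0 ht1
      have hA := hT (t • y + (1 - t) • T)
      have hB := hconvex y T t (le_of_lt ht0) ht1
      have hreal : hTr + M / 2 * ‖s‖ ^ 2
          ≤ t * hyr + (1 - t) * hTr + M / 2 * ‖t • w + s‖ ^ 2 := by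
        have heq : t • y + (1 - t) • T - u = t • w + s := by rw [hw, hs]; module
        rw [hhT] at hA hB
        rw [hhy] at hB
        rw [heq] at hA
        have hB' : h (t • y + (1 - t) • T)
            ≤ ((t * hyr + (1 - t) * hTr : ℝ) : EReal) := by
          refine hB.trans_eq ?_
          push_cast
          rfl
        have := hA.trans (add_le_add_left hB' _)
        rw [← EReal.coe_add, ← EReal.coe_add, EReal.coe_le_coe_iff] at this
        linarith [this]
      have hexp : ‖t • w + s‖ ^ 2 = t ^ 2 * ‖w‖ ^ 2 + 2 * t * ⟪w, s⟫ + ‖s‖ ^ 2 := by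
        rw [norm_add_sq_real, real_inner_smul_left, norm_smul,
          Real.norm_eq_abs, abs_of_pos ht0]
        ring
      rw [hexp] at hreal
      have ht' : t * (hTr - hyr) ≤ t * (M * ⟪w, s⟫ + M / 2 * t * ‖w‖ ^ 2) := by
        nlinarith [hreal]
      exact le_of_mul_le_mul_left ht' ht0
    have hlim : hTr - hyr ≤ M * ⟪w, s⟫ := by
      have : ∀ ε > (0:ℝ), hTr - hyr - ε ≤ M * ⟪w, s⟫ := by
        intro ε hε
        set C := M / 2 * ‖w‖ ^ 2 with hC
        have hC0 : 0 ≤ C := by positivity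
        set t := min 1 (ε / (C + 1)) with htdef
        have ht0 : 0 < t := lt_min one_pos (by positivity)
        have ht1 : t ≤ 1 := min_le_left _ _
        have h1 := stepT t ht0 ht1
        have h2 : C * t ≤ ε := by
          have : t ≤ ε / (C + 1) := min_le_right _ _
          calc C * t ≤ C * (ε / (C + 1)) :=
              mul_le_mul_of_nonneg_left this hC0
            _ ≤ ε := by
                rw [mul_div_assoc']
                rw [div_le_iff₀ (by linarith)]
                nlinarith
        nlinarith [h1, h2]
      exact le_of_forall_sub_le this
    -- rewrite M * ⟪w, s⟫
    have hMs : M • s = gradient l x - G := by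
      rw [hs, hu, hG]
      rw [smul_sub, smul_sub, smul_smul, mul_one_div_cancel hM.ne', one_smul, smul_sub]
      abel
    have : M * ⟪w, s⟫ = ⟪gradient l x - G, y - T⟫ := by
      rw [← real_inner_smul_right, hMs, real_inner_comm, hw]
    linarith [hlim, this ▸ hlim]
  -- descent lemma with M
  have hdesc : l T ≤ l x + ⟪gradient l x, T - x⟫ + M / 2 * ‖T - x‖ ^ 2 := by
    have := aux_descent l hldiff L hLip x T
    nlinarith [sq_nonneg ‖T - x‖]
  have hconv := aux_convex l hlconv hldiff x y
  -- relation T - x and G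
  have hTx : T - x = -((1 / M) • G) := by
    rw [hG, smul_smul, mul_comm, mul_one_div_cancel hM.ne', one_smul]
    abel
  have hnTx : ‖T - x‖ ^ 2 = (1 / M) ^ 2 * ‖G‖ ^ 2 := by
    rw [hTx, norm_neg, norm_smul, Real.norm_eq_abs, abs_of_pos (by positivity : (0:ℝ) < 1 / M)]
    ring
  -- the main real inequality
  have hmain : l T + hTr ≤ l y + hyr + (⟪G, x - y⟫ - 1 / (2 * M) * ‖G‖ ^ 2) := by
    have hid : ⟪gradient l x, T - x⟫ + ⟪gradient l x - G, y - T⟫ - ⟪gradient l x, y - x⟫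
        + M / 2 * ‖T - x‖ ^ 2 = ⟪G, x - y⟫ - 1 / (2 * M) * ‖G‖ ^ 2 := by
      have hyT : y - T = (y - x) + (1 / M) • G := by
        rw [hG, smul_smul, mul_comm, mul_one_div_cancel hM.ne', one_smul]; abel
      rw [hnTx, hyT, hTx]
      simp only [inner_sub_left, inner_add_right, inner_neg_right, real_inner_smul_right,
        inner_smul_left, real_inner_self_eq_norm_sq]
      have : ⟪G, y - x⟫ = -⟪G, x - y⟫ := by
        rw [← inner_neg_right]; congr 1; abel
      rw [this]
      field_simp
      ring
    linarith [hdesc, hconv, key, hid]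
  have hmain2 : l T + hTr ≤ l y + hyr + ‖G‖ * ‖x - y‖ := by
    have h1 : ⟪G, x - y⟫ ≤ ‖G‖ * ‖x - y‖ := real_inner_le_norm _ _
    have h2 : 0 ≤ 1 / (2 * M) * ‖G‖ ^ 2 := by positivity
    linarith
  constructor
  · rw [hFn, hFn, hhT, hhy, ← EReal.coe_add, ← EReal.coe_add, ← EReal.coe_add,
      EReal.coe_le_coe_iff]
    linarith
  · rw [hFn, hFn, hhT, hhy, ← EReal.coe_add, ← EReal.coe_add, ← EReal.coe_add,
      EReal.coe_le_coe_iff]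
    linarith
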